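/- Let γ be an axis path of shape (e_{i₁},…,e_{iₙ}) (reduced, i_k ≠ i_{k+1}, all rₖ ≠ 0). If w' is any square-free word with |w'| ≥ n+1, then the signature coefficient C(w') = 0; thus w = e_{i₁}⋯e_{iₙ} is the unique longest square-free word with nonzero coefficient. -/

import Mathlib

open scoped ENNReal Classical

/-- The approximation to the signature coefficient of the word `w` of the path
`γ : [s,t] → ℝ^d` given by the iterated Riemann–Stieltjes sum along the dyadic partition
of `[s,t]` of mesh `(t-s)/2^m`. -/
noncomputable def dyadicSigSum (d : ℕ) (γ : ℝ → PiLp 1 fun _ : Fin d => ℝ) (s t : ℝ)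
    {n : ℕ} (w : Fin n → Fin d) (m : ℕ) : ℝ :=
  ∑ j ∈ Finset.univ.filter (fun j : Fin n → Fin (2 ^ m) => StrictMono j),
    ∏ i : Fin n,
      (γ (s + (t - s) * ((j i : ℝ) + 1) / 2 ^ m) (w i) -
       γ (s + (t - s) * (j i : ℝ) / 2 ^ m) (w i))

/-- The signature coefficient `C_{s,t}(w) = ∫_{s<u₁<⋯<uₙ<t} dγ_{w₁}(u₁)⋯dγ_{wₙ}(uₙ)` of
the word `w`, defined as the limit of iterated Riemann–Stieltjes sums along dyadic
partitions (for continuous paths of bounded variation this limit exists and is the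
iterated integral over the simplex). -/
noncomputable def sigCoeff (d : ℕ) (γ : ℝ → PiLp 1 fun _ : Fin d => ℝ) (s t : ℝ)
    {n : ℕ} (w : Fin n → Fin d) : ℝ :=
  Filter.limUnder Filter.atTop (dyadicSigSum d γ s t w)

/-- The degree-`n` signature term `X^n_{s,t}(γ) ∈ (ℝ^d)^{⊗n}`, recorded by its coordinates
in the basis of words of length `n`, and normed with the `ℓ¹` norm of the coordinates:
for the `ℓ¹` norm on `ℝ^d` this is exactly the projective tensor norm on `(ℝ^d)^{⊗n}`. -/
noncomputable def sig (d : ℕ) (γ : ℝ → PiLp 1 fun _ : Fin d => ℝ) (s t : ℝ) (n : ℕ) :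
    PiLp 1 fun _ : Fin n → Fin d => ℝ :=
  WithLp.toLp 1 fun w => sigCoeff d γ s t w
/-- The axis path `γ = r₁e_{i₁} * ⋯ * rₙe_{iₙ}` in `ℝ^d` (with the `ℓ¹` norm),
parametrized on `[0,1]`: on the `k`-th of `n` equal subintervals it moves linearly by
`r k` in the coordinate direction `idx k`. -/
noncomputable def axisPath (d : ℕ) {n : ℕ} (idx : Fin n → Fin d) (r : Fin n → ℝ)
    (t : ℝ) : PiLp 1 fun _ : Fin d => ℝ :=
  ∑ j : Fin n,
    (min (max ((n : ℝ) * t - (j : ℝ)) 0) 1 * r j) •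
      (WithLp.toLp 1 (Pi.single (idx j) 1) : PiLp 1 fun _ : Fin d => ℝ)

lemma axisA (d : ℕ) {n : ℕ} (idx : Fin n → Fin d) (r : Fin n → ℝ) (c : Fin d)
    (u₁ u₂ : ℝ) (h12 : u₁ ≤ u₂)
    (h : axisPath d idx r u₂ c - axisPath d idx r u₁ c ≠ 0) :
    ∃ k : Fin n, idx k = c ∧ (k : ℝ) < n * u₂ ∧ (n : ℝ) * u₁ < (k : ℝ) + 1 := by
  by_contra hc
  push_neg at hc
  apply h
  have hpt : ∀ t : ℝ, axisPath d idx r t c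
      = ∑ k : Fin n, (min (max ((n : ℝ) * t - (k : ℝ)) 0) 1 * r k) *
          ((Pi.single (idx k) (1:ℝ) : Fin d → ℝ) c) := by
    intro t
    rw [axisPath, WithLp.ofLp_sum, Finset.sum_apply]
    rfl
  rw [hpt, hpt, ← Finset.sum_sub_distrib]
  apply Finset.sum_eq_zero
  intro k _
  by_cases hk : idx k = c
  · rcases lt_or_ge (k:ℝ) ((n:ℝ)*u₂) with hA | h1
    · have h2 := hc k hk hA
      have h2' : (k : ℝ) + 1 ≤ (n : ℝ) * u₂ := le_trans h2 (by nlinarith [Nat.cast_nonneg (α := ℝ) n])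
      have e2 : min (max ((n : ℝ) * u₂ - k) 0) 1 = 1 := by
        rw [max_eq_left (by linarith), min_eq_right (by linarith)]
      have e1 : min (max ((n : ℝ) * u₁ - k) 0) 1 = 1 := by
        rw [max_eq_left (by linarith), min_eq_right (by linarith)]
      rw [e1, e2]; ring
    · have h1' : (n : ℝ) * u₁ ≤ k := le_trans (by nlinarith [Nat.cast_nonneg (α := ℝ) n]) h1
      have e2 : min (max ((n : ℝ) * u₂ - k) 0) 1 = 0 := by
        rw [max_eq_right (by linarith), min_eq_left (by norm_num)]
      have e1 : min (max ((n : ℝ) * u₁ - k) 0) 1 = 0 := by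
        rw [max_eq_right (by linarith), min_eq_left (by norm_num)]
      rw [e1, e2]; ring
  · rw [Pi.single_eq_of_ne (fun he => hk he.symm)]
    ring


/-- For a reduced axis path of shape `(e_{i₁},…,e_{iₙ})`, every square-free word `w'` of
length at least `n+1` has vanishing signature coefficient; thus the shape word is the
unique longest square-free word with nonzero coefficient. -/
theorem axisPath_longer_squarefree_vanish (d : ℕ) {n : ℕ} (idx : Fin n → Fin d)
    (r : Fin n → ℝ) (hr : ∀ k, r k ≠ 0)
    (hsf : ∀ k : Fin n, ∀ h : (k : ℕ) + 1 < n, idx k ≠ idx ⟨(k : ℕ) + 1, h⟩)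
    (m : ℕ) (hm : n + 1 ≤ m) (w' : Fin m → Fin d)
    (hw' : ∀ k : Fin m, ∀ h : (k : ℕ) + 1 < m, w' k ≠ w' ⟨(k : ℕ) + 1, h⟩) :
    sigCoeff d (axisPath d idx r) 0 1 w' = 0 := by
  have hz : ∀ M, dyadicSigSum d (axisPath d idx r) 0 1 w' M = 0 := by
    intro M
    apply Finset.sum_eq_zero
    intro j hj
    rw [Finset.mem_filter] at hj
    have hjm := hj.2
    by_contra hp
    have h2M : (0:ℝ) < 2 ^ M := by positivity
    have hfac : ∀ i : Fin m,
        (axisPath d idx r (0 + (1 - 0) * ((j i : ℝ) + 1) / 2 ^ M) (w' i) -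
         axisPath d idx r (0 + (1 - 0) * (j i : ℝ) / 2 ^ M) (w' i)) ≠ 0 :=
      fun i => Finset.prod_ne_zero_iff.mp hp i (Finset.mem_univ i)
    have key : ∀ i : Fin m, ∃ k : Fin n, idx k = w' i ∧
        (k : ℝ) < n * ((0:ℝ) + (1 - 0) * ((j i : ℝ) + 1) / 2 ^ M) ∧
        (n : ℝ) * ((0:ℝ) + (1 - 0) * (j i : ℝ) / 2 ^ M) < (k : ℝ) + 1 := by
      intro i
      apply axisA d idx r (w' i) _ _ _ (hfac i)
      have : (j i : ℝ) ≤ (j i : ℝ) + 1 := by linarith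
      gcongr <;> first | positivity | linarith
    choose K hK1 hK2 hK3 using key
    have hmono : ∀ i : Fin m, ∀ h : (i : ℕ) + 1 < m, (K i : ℕ) < (K ⟨(i:ℕ)+1, h⟩ : ℕ) := by
      intro i h
      have hji : (j i : ℕ) + 1 ≤ (j ⟨(i:ℕ)+1, h⟩ : ℕ) := by
        have : j i < j ⟨(i:ℕ)+1, h⟩ := hjm (by exact Fin.mk_lt_mk.mpr (Nat.lt_succ_self _) )
        exact this
      have hji' : ((j i : ℝ) + 1) ≤ (j ⟨(i:ℕ)+1, h⟩ : ℝ) := by exact_mod_cast hji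
      have hchain : (K i : ℝ) < (K ⟨(i:ℕ)+1, h⟩ : ℝ) + 1 := by
        have h1 := hK2 i
        have h2 := hK3 ⟨(i:ℕ)+1, h⟩
        have hmid : (n:ℝ) * ((0:ℝ) + (1 - 0) * ((j i : ℝ) + 1) / 2 ^ M)
            ≤ (n:ℝ) * ((0:ℝ) + (1 - 0) * (j ⟨(i:ℕ)+1, h⟩ : ℝ) / 2 ^ M) := by
          gcongr <;> first | positivity | linarith
        linarith
      have hle : (K i : ℕ) < (K ⟨(i:ℕ)+1, h⟩ : ℕ) + 1 := by exact_mod_cast hchain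
      have hne : (K i : ℕ) ≠ (K ⟨(i:ℕ)+1, h⟩ : ℕ) := by
        intro he
        apply hw' i h
        rw [← hK1 i, ← hK1 ⟨(i:ℕ)+1, h⟩]
        congr 1
        exact Fin.ext he
      omega
    have hpig : ∀ i : ℕ, ∀ hi : i < m, i ≤ (K ⟨i, hi⟩ : ℕ) := by
      intro i
      induction i with
      | zero => intro hi; exact Nat.zero_le _
      | succ i ih =>
        intro hi
        have hi' : i < m := Nat.lt_of_succ_lt hi
        have h2 := hmono ⟨i, hi'⟩ hi
        simp only [Fin.val_mk] at h2
        have := ih hi'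
        omega
    have hnm : n < m := hm
    have := hpig n hnm
    have := (K ⟨n, hnm⟩).isLt
    omega
  have : dyadicSigSum d (axisPath d idx r) 0 1 w' = fun _ => 0 := funext hz
  rw [sigCoeff, this]
  exact Filter.Tendsto.limUnder_eq tendsto_const_nhds
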